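/- For N = 2 sellers, the speculator's expected profit in the second-price auction decomposes, for every v* ∈ [0,r], as Π*(v*) = [F(v*)² r − ∫₀^{v*} 2 x F(x) f(x) dx] − 2 ∫₀^{v*} F(x)² dx − ∫₀^{v*} 2 x F(x) f(x) dx, where the first bracket is the gain from supply withholding, the second term is the loss from overcompensating the sellers, and the third term is the loss from destroying private values. -/

import Mathlib

open MeasureTheory Set

/-- Second-price acquisition price: `p*(v) = v + ∫_v^r (1−F x)^(N−1) dx`. -/
noncomputable def pstar (F : ℝ → ℝ) (N : ℕ) (r : ℝ) (v : ℝ) : ℝ :=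
  v + ∫ x in v..r, (1 - F x) ^ (N - 1)

/-- Speculator's expected payment from a second-price subgame against `m` sellers. -/
noncomputable def y (F : ℝ → ℝ) (r : ℝ) (m : ℕ) (v : ℝ) : ℝ :=
  v + ∫ x in v..r, ((1 - F x) / (1 - F v)) ^ m

/-- Speculator's expected profit in the second-price speculation game at cutoff `v`. -/
noncomputable def PiSPA (F : ℝ → ℝ) (N : ℕ) (r : ℝ) (v : ℝ) : ℝ :=
  (∑ m ∈ Finset.range N,
      (N.choose m : ℝ) * (F v) ^ (N - m) * (1 - F v) ^ m * y F r m v)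
    - N * F v * pstar F N r v

/-- For `N = 2`, the speculator's second-price profit decomposes into the gain from
supply withholding, the loss from overcompensating the sellers, and the loss from
destroying private values. -/
theorem PiSPA_two_seller_decomposition
    (F f : ℝ → ℝ)
    (hderiv : ∀ x ∈ Icc (0 : ℝ) 1, HasDerivAt F (f x) x)
    (hfc : ContinuousOn f (Icc 0 1))
    (hFmono : Monotone F)
    (hF0 : F 0 = 0) (hFpos : ∀ v ∈ Ioc (0 : ℝ) 1, 0 < F v)
    (hFlt1 : ∀ v ∈ Ico (0 : ℝ) 1, F v < 1) (hF1 : F 1 = 1)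
    (r : ℝ) (hr : r ∈ Ioc (0 : ℝ) 1) :
    ∀ v ∈ Icc (0 : ℝ) r,
      PiSPA F 2 r v =
        ((F v) ^ 2 * r - ∫ x in (0 : ℝ)..v, 2 * x * F x * f x)
          - 2 * (∫ x in (0 : ℝ)..v, (F x) ^ 2)
          - ∫ x in (0 : ℝ)..v, 2 * x * F x * f x := by
  intro v hv
  have hv1 : v ∈ Icc (0 : ℝ) 1 := ⟨hv.1, hv.2.trans hr.2⟩
  have hsub : Icc (0 : ℝ) v ⊆ Icc 0 1 := Icc_subset_Icc le_rfl hv1.2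
  have hFcont : ContinuousOn F (Icc 0 1) := fun x hx =>
    (hderiv x hx).continuousAt.continuousWithinAt
  have hcont1 : ContinuousOn (fun x => F x ^ 2) (Icc 0 v) := (hFcont.mono hsub).pow 2
  have hcont2 : ContinuousOn (fun x => 2 * x * F x * f x) (Icc 0 v) :=
    (((continuousOn_const.mul continuousOn_id).mul (hFcont.mono hsub)).mul (hfc.mono hsub))
  have hI1 : IntervalIntegrable (fun x => F x ^ 2) volume 0 v :=
    hcont1.intervalIntegrable_of_Icc hv.1
  have hI2 : IntervalIntegrable (fun x => 2 * x * F x * f x) volume 0 v :=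
    hcont2.intervalIntegrable_of_Icc hv.1
  have hFTC : (∫ x in (0:ℝ)..v, (F x ^ 2 + 2 * x * F x * f x))
      = v * F v ^ 2 - 0 * F 0 ^ 2 := by
    apply intervalIntegral.integral_eq_sub_of_hasDerivAt
    · intro x hx
      rw [uIcc_of_le hv.1] at hx
      have h := (hasDerivAt_id x).mul ((hderiv x (hsub hx)).pow 2)
      convert h using 1
      · rfl
      · funext y; simp
      · simp; ring
    · exact hI1.add hI2
  have hsum : (∫ x in (0:ℝ)..v, (F x ^ 2 + 2 * x * F x * f x))
      = (∫ x in (0:ℝ)..v, F x ^ 2) + ∫ x in (0:ℝ)..v, 2 * x * F x * f x :=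
    intervalIntegral.integral_add hI1 hI2
  have hkey : v * F v ^ 2
      = (∫ x in (0:ℝ)..v, F x ^ 2) + ∫ x in (0:ℝ)..v, 2 * x * F x * f x := by
    rw [← hsum, hFTC]; ring
  -- compute PiSPA
  have hy0 : y F r 0 v = r := by
    simp [y]
  have h1 : (1 - F v) * y F r 1 v
      = (1 - F v) * v + ∫ x in v..r, (1 - F x) := by
    by_cases hFv : F v = 1
    · have hv1' : v = 1 := by
        by_contra h
        have : v < 1 := lt_of_le_of_ne hv1.2 h
        exact absurd hFv (ne_of_lt (hFlt1 v ⟨hv1.1, this⟩))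
      have hr1 : r = 1 := le_antisymm hr.2 (hv1' ▸ hv.2)
      simp [y, hFv, hv1', hr1]
    · have hne : (1 : ℝ) - F v ≠ 0 := sub_ne_zero.mpr (Ne.symm hFv)
      have : y F r 1 v = v + (∫ x in v..r, (1 - F x)) / (1 - F v) := by
        simp only [y, pow_one]
        rw [intervalIntegral.integral_div]
      rw [this]
      field_simp
  have hpstar : pstar F 2 r v = v + ∫ x in v..r, (1 - F x) := by
    simp [pstar]
  have hPi : PiSPA F 2 r v = F v ^ 2 * r - 2 * (v * F v ^ 2) := by
    simp only [PiSPA, Finset.sum_range_succ, Finset.sum_range_zero, hpstar, hy0]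
    norm_num
    linear_combination 2 * F v * h1
  rw [hPi]
  linear_combination (-2 : ℝ) * hkey
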